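/- Let (M, η, μ) be a monad on a category C with binary coproducts, and define M^s = Id + M with μ^s = [id, inr ∘ μ ∘ M[η, id_M]]. Then μ^s is associative: μ^s ∘ μ^s M^s = μ^s ∘ M^s μ^s. -/

import Mathlib

open CategoryTheory CategoryTheory.Limits

universe v u

variable {C : Type u} [Category.{v} C] [HasBinaryCoproducts C]

/-- The underlying functor `Id + M` of the semifree monad. -/
noncomputable def MsF (M : Monad C) : C ⥤ C where
  obj X := X ⨿ M.obj X
  map f := coprod.map f (M.map f)

/-- The unit of the semifree monad: the left coproduct injection. -/
noncomputable def ηs (M : Monad C) (X : C) : X ⟶ (MsF M).obj X := coprod.inl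

/-- The multiplication of the semifree monad:
`μ^s = [id, inr ∘ μ ∘ M[η, id_M]]`. -/
noncomputable def μs (M : Monad C) (X : C) : (MsF M).obj ((MsF M).obj X) ⟶ (MsF M).obj X :=
  coprod.desc (𝟙 ((MsF M).obj X))
    (M.map (coprod.desc (M.η.app X) (𝟙 (M.obj X))) ≫ M.μ.app X ≫ coprod.inr)
/-- Associativity of the semifree multiplication: `μ^s ∘ μ^s M^s = μ^s ∘ M^s μ^s`. -/
theorem semifree_assoc (M : Monad C) (X : C) :
    μs M ((MsF M).obj X) ≫ μs M X = (MsF M).map (μs M X) ≫ μs M X := by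
  unfold μs MsF
  apply coprod.hom_ext <;>
    simp only [coprod.inl_desc, coprod.inr_desc, coprod.inl_desc_assoc, coprod.inr_desc_assoc, coprod.map_desc, Category.id_comp,
      Category.comp_id, Category.assoc, coprod.desc_comp, Functor.comp_map,
      ← M.μ.naturality_assoc, ← Functor.map_comp_assoc]
  slice_lhs 2 3 => rw [← M.assoc]
  simp only [Category.assoc, ← Functor.map_comp_assoc]
  congr 2
  apply coprod.hom_ext <;> simp [← M.η.naturality_assoc, coprod.inl_desc_assoc, coprod.inr_desc_assoc]
  · rw [coprod.inl_desc]
  · rw [coprod.inr_desc, coprod.inr_desc, Category.comp_id]
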